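/- For s,t with 1/3 ≤ s,t ≤ 2/3 and s ∉ [4/9,5/9] or t ∉ [4/9,5/9], the simplex R(s,t) (vertices as above) satisfies ξ(R(s,t)) = 6·max{2/3, 2−3s, 3s−1, 2−3t, 3t−1} + 1 > 5. -/

import Mathlib

open Finset MeasureTheory

/-- The unit cube `[0,1]^n` in `ℝ^n`. -/
def unitCube (n : ℕ) : Set (Fin n → ℝ) := {x | ∀ i, 0 ≤ x i ∧ x i ≤ 1}

/-- The set of vertices of the unit cube, i.e. `{0,1}^n`. -/
def cubeVerts (n : ℕ) : Set (Fin n → ℝ) := {x | ∀ i, x i = 0 ∨ x i = 1}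

/-- The (solid) simplex spanned by `n+1` points. -/
def simplexSet {n : ℕ} (v : Fin (n + 1) → (Fin n → ℝ)) : Set (Fin n → ℝ) :=
  convexHull ℝ (Set.range v)

/-- The centroid (center of gravity) of the simplex with vertices `v`. -/
noncomputable def simplexCentroid {n : ℕ} (v : Fin (n + 1) → (Fin n → ℝ)) : Fin n → ℝ :=
  ((n : ℝ) + 1)⁻¹ • ∑ j, v j

/-- The homothety of the simplex with vertices `v`, with center the centroid and ratio `σ`. -/
noncomputable def homSimplex {n : ℕ} (v : Fin (n + 1) → (Fin n → ℝ)) (σ : ℝ) : Set (Fin n → ℝ) :=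
  (fun x => simplexCentroid v + σ • (x - simplexCentroid v)) '' simplexSet v

/-- `ξ(S) = min {σ ≥ 1 : Q_n ⊆ σS}`. -/
noncomputable def xiVal {n : ℕ} (v : Fin (n + 1) → (Fin n → ℝ)) : ℝ :=
  sInf {σ : ℝ | 1 ≤ σ ∧ unitCube n ⊆ homSimplex v σ}

/-- A function `ℝ^n → ℝ` is an affine polynomial of degree at most 1. -/
def IsAffinePoly {n : ℕ} (f : (Fin n → ℝ) → ℝ) : Prop :=
  ∃ a : Fin n → ℝ, ∃ b : ℝ, ∀ x, f x = ∑ i, a i * x i + b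

/-- `lam` is the family of basic Lagrange polynomials of the simplex with vertices `v`. -/
def IsLagrangeBasis {n : ℕ} (v : Fin (n + 1) → (Fin n → ℝ))
    (lam : Fin (n + 1) → (Fin n → ℝ) → ℝ) : Prop :=
  (∀ j, IsAffinePoly (lam j)) ∧ ∀ j k, lam j (v k) = if j = k then 1 else 0

/-- The `i`-th axial diameter of a set `S ⊆ ℝ^n`: the supremum of lengths of segments
in `S` parallel to the `i`-th coordinate axis. -/
noncomputable def axialDiam {n : ℕ} (S : Set (Fin n → ℝ)) (i : Fin n) : ℝ :=
  sSup {t : ℝ | ∃ x ∈ S, ∃ y ∈ S, (∀ k, k ≠ i → x k = y k) ∧ y i - x i = t}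

/-- The family of simplices `R(s,t) ⊂ ℝ⁵`. -/
noncomputable def Rverts (s t : ℝ) : Fin 6 → (Fin 5 → ℝ) :=
  ![![s, 1, 1/3, 1, 1], ![s, 0, 1/3, 1, 1], ![s, 2 - 3*t, 1/3, 0, 1],
    ![2 - 3*s, t, 0, 1/3, 0], ![0, t, 1, 1/3, 0], ![1, t, 1, 1/3, 0]]

/-! ### Auxiliary material: the explicit Lagrange basis of `R(s,t)` -/

/-- The explicit Lagrange basis of the simplex `R(s,t)`. -/
noncomputable def lamRst (s t : ℝ) : Fin 6 → (Fin 5 → ℝ) → ℝ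
  | 0 => fun x => x 1 + (2-3*t)*x 3 + (3*t-4/3)*x 4 - 2/3
  | 1 => fun x => -x 1 + (3*t-1)*x 3 + (5/3-3*t)*x 4 + 1/3
  | 2 => fun x => -x 3 + (2/3)*x 4 + 1/3
  | 3 => fun x => -x 2 - (2/3)*x 4 + 1
  | 4 => fun x => -x 0 + (3*s-1)*x 2 + (3*s-5/3)*x 4 + (2-3*s)
  | 5 => fun x => x 0 + (2-3*s)*x 2 + (4/3-3*s)*x 4 + (3*s-2)

lemma cons_val_five' {α : Type*} (a b c d e f : α) : ![a,b,c,d,e,f] 5 = f := rfl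

lemma fin6_mk0 : (⟨0, by omega⟩ : Fin 6) = 0 := rfl
lemma fin6_mk1 : (⟨1, by omega⟩ : Fin 6) = 1 := rfl
lemma fin6_mk2 : (⟨2, by omega⟩ : Fin 6) = 2 := rfl
lemma fin6_mk3 : (⟨3, by omega⟩ : Fin 6) = 3 := rfl
lemma fin6_mk4 : (⟨4, by omega⟩ : Fin 6) = 4 := rfl
lemma fin6_mk5 : (⟨5, by omega⟩ : Fin 6) = 5 := rfl
lemma fin5_mk0 : (⟨0, by omega⟩ : Fin 5) = 0 := rfl
lemma fin5_mk1 : (⟨1, by omega⟩ : Fin 5) = 1 := rfl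
lemma fin5_mk2 : (⟨2, by omega⟩ : Fin 5) = 2 := rfl
lemma fin5_mk3 : (⟨3, by omega⟩ : Fin 5) = 3 := rfl
lemma fin5_mk4 : (⟨4, by omega⟩ : Fin 5) = 4 := rfl

lemma lam_vertex (s t : ℝ) (j k : Fin 6) :
    lamRst s t j (Rverts s t k) = if j = k then 1 else 0 := by
  fin_cases j <;> fin_cases k <;>
    simp only [lamRst, Rverts, fin6_mk0, fin6_mk1, fin6_mk2, fin6_mk3, fin6_mk4, fin6_mk5,
      fin5_mk0, fin5_mk1, fin5_mk2, fin5_mk3, fin5_mk4, cons_val_five', Matrix.cons_val_zero,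
      Matrix.cons_val_one, Matrix.head_cons, Matrix.cons_val_two, Matrix.tail_cons,
      Matrix.cons_val_three, Matrix.cons_val_four] <;>
    (try simp) <;> (try norm_num) <;> (try ring)

lemma lam_comb (s t : ℝ) (k : Fin 6) (x y : Fin 5 → ℝ) (a b : ℝ) (hab : a + b = 1) :
    lamRst s t k (a • x + b • y) = a * lamRst s t k x + b * lamRst s t k y := by
  have hb : b = 1 - a := by linarith
  subst hb
  fin_cases k <;>
    simp only [lamRst, Pi.add_apply, Pi.smul_apply, smul_eq_mul] <;> ring

lemma lam_sum_vert (s t : ℝ) (x : Fin 5 → ℝ) (i : Fin 5) :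
    ∑ k, lamRst s t k x * Rverts s t k i = x i := by
  fin_cases i <;>
    simp only [Fin.sum_univ_six, lamRst, Rverts, fin6_mk0, fin6_mk1, fin6_mk2, fin6_mk3,
      fin6_mk4, fin6_mk5, fin5_mk0, fin5_mk1, fin5_mk2, fin5_mk3, fin5_mk4, cons_val_five',
      Matrix.cons_val_zero, Matrix.cons_val_one, Matrix.head_cons, Matrix.cons_val_two,
      Matrix.tail_cons, Matrix.cons_val_three, Matrix.cons_val_four] <;> ring

lemma lam_sum_one (s t : ℝ) (x : Fin 5 → ℝ) : ∑ k, lamRst s t k x = 1 := by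
  simp only [Fin.sum_univ_six, lamRst]; ring

lemma vert_sum (s t : ℝ) (i : Fin 5) : ∑ k, Rverts s t k i = 3 := by
  fin_cases i <;>
    simp only [Fin.sum_univ_six, Rverts, fin6_mk0, fin6_mk1, fin6_mk2, fin6_mk3, fin6_mk4,
      fin6_mk5, fin5_mk0, fin5_mk1, fin5_mk2, fin5_mk3, fin5_mk4, cons_val_five',
      Matrix.cons_val_zero, Matrix.cons_val_one, Matrix.head_cons, Matrix.cons_val_two,
      Matrix.tail_cons, Matrix.cons_val_three, Matrix.cons_val_four] <;> ring

lemma centroid_Rst (s t : ℝ) : simplexCentroid (Rverts s t) = fun _ => (1/2 : ℝ) := by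
  funext i
  have : (∑ j, Rverts s t j) i = ∑ j, Rverts s t j i := by
    simp [Finset.sum_apply]
  simp only [simplexCentroid, Pi.smul_apply, smul_eq_mul, this, vert_sum]
  norm_num

lemma lam_centroid (s t : ℝ) (k : Fin 6) : lamRst s t k (fun _ => (1/2:ℝ)) = 1/6 := by
  fin_cases k <;> simp only [lamRst] <;> ring

lemma lam_nonneg_hull (s t : ℝ) (k : Fin 6) :
    ∀ x ∈ simplexSet (Rverts s t), 0 ≤ lamRst s t k x := by
  intro x hx
  have hsub : simplexSet (Rverts s t) ⊆ {y | 0 ≤ lamRst s t k y} := by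
    apply convexHull_min
    · rintro y ⟨j, rfl⟩
      simp only [Set.mem_setOf_eq, lam_vertex]
      split <;> norm_num
    · intro u hu v hv a b ha hb hab
      have hcb := lam_comb s t k u v a b hab
      simp only [Set.mem_setOf_eq] at hu hv ⊢
      rw [hcb]
      have := mul_nonneg ha hu
      have := mul_nonneg hb hv
      linarith
  exact hsub hx

set_option maxHeartbeats 1000000 in
lemma lam_cube_lb (s t : ℝ) (hs1 : 1/3 ≤ s) (hs2 : s ≤ 2/3) (ht1 : 1/3 ≤ t) (ht2 : t ≤ 2/3)
    (A : ℝ) (hA1 : 2/3 ≤ A) (hA2 : 2-3*s ≤ A) (hA3 : 3*s-1 ≤ A) (hA4 : 2-3*t ≤ A)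
    (hA5 : 3*t-1 ≤ A) (x : Fin 5 → ℝ) (hx : ∀ i, 0 ≤ x i ∧ x i ≤ 1) (k : Fin 6) :
    -A ≤ lamRst s t k x := by
  have h0 := hx 0; have h1 := hx 1; have h2 := hx 2; have h3 := hx 3; have h4 := hx 4
  fin_cases k <;> simp only [lamRst]
  · rcases le_total (3*t-4/3) 0 with hc | hc
    · nlinarith [mul_nonneg (by linarith : (0:ℝ) ≤ 2-3*t) h3.1,
        mul_nonneg (neg_nonneg.2 hc) (by linarith [h4.2] : (0:ℝ) ≤ 1 - x 4), h1.1, h0.1, h2.1, h3.1, h4.1]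
    · nlinarith [mul_nonneg (by linarith : (0:ℝ) ≤ 2-3*t) h3.1,
        mul_nonneg hc h4.1]
  · rcases le_total (5/3-3*t) 0 with hc | hc
    · nlinarith [mul_nonneg (by linarith : (0:ℝ) ≤ 3*t-1) h3.1,
        mul_nonneg (neg_nonneg.2 hc) (by linarith [h4.2] : (0:ℝ) ≤ 1 - x 4), h1.1, h0.1, h2.1, h3.1, h4.1]
    · nlinarith [mul_nonneg (by linarith : (0:ℝ) ≤ 3*t-1) h3.1,
        mul_nonneg hc h4.1]
  · nlinarith
  · nlinarith
  · rcases le_total (3*s-5/3) 0 with hc | hc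
    · nlinarith [mul_nonneg (by linarith : (0:ℝ) ≤ 3*s-1) h2.1,
        mul_nonneg (neg_nonneg.2 hc) (by linarith [h4.2] : (0:ℝ) ≤ 1 - x 4), h1.1, h0.1, h2.1, h3.1, h4.1]
    · nlinarith [mul_nonneg (by linarith : (0:ℝ) ≤ 3*s-1) h2.1,
        mul_nonneg hc h4.1]
  · rcases le_total (4/3-3*s) 0 with hc | hc
    · nlinarith [mul_nonneg (by linarith : (0:ℝ) ≤ 2-3*s) h2.1,
        mul_nonneg (neg_nonneg.2 hc) (by linarith [h4.2] : (0:ℝ) ≤ 1 - x 4), h1.1, h0.1, h2.1, h3.1, h4.1]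
    · nlinarith [mul_nonneg (by linarith : (0:ℝ) ≤ 2-3*s) h2.1,
        mul_nonneg hc h4.1]

/-- for `1/3 ≤ s,t ≤ 2/3` with `s ∉ [4/9,5/9]` or `t ∉ [4/9,5/9]`,
`ξ(R(s,t)) = 6·max{2/3, 2−3s, 3s−1, 2−3t, 3t−1} + 1 > 5`. -/
theorem Rst_nonextremal (s t : ℝ) (hs : s ∈ Set.Icc (1/3 : ℝ) (2/3))
    (ht : t ∈ Set.Icc (1/3 : ℝ) (2/3))
    (h : s ∉ Set.Icc (4/9 : ℝ) (5/9) ∨ t ∉ Set.Icc (4/9 : ℝ) (5/9)) :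
    xiVal (Rverts s t) =
      6 * max (2/3 : ℝ) (max (2 - 3*s) (max (3*s - 1) (max (2 - 3*t) (3*t - 1)))) + 1 ∧
    5 < xiVal (Rverts s t) := by
  obtain ⟨hs1, hs2⟩ := hs
  obtain ⟨ht1, ht2⟩ := ht
  set A := max (2/3 : ℝ) (max (2 - 3*s) (max (3*s - 1) (max (2 - 3*t) (3*t - 1)))) with hA
  have hA1 : (2/3 : ℝ) ≤ A := le_max_left _ _
  have hA2 : 2 - 3*s ≤ A := le_trans (le_max_left _ _) (le_max_right _ _)
  have hA3 : 3*s - 1 ≤ A :=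
    le_trans (le_trans (le_max_left _ _) (le_max_right _ _)) (le_max_right _ _)
  have hA4 : 2 - 3*t ≤ A :=
    le_trans (le_trans (le_trans (le_max_left _ _) (le_max_right _ _)) (le_max_right _ _))
      (le_max_right _ _)
  have hA5 : 3*t - 1 ≤ A :=
    le_trans (le_trans (le_trans (le_max_right _ _) (le_max_right _ _)) (le_max_right _ _))
      (le_max_right _ _)
  set M := 6 * A + 1 with hM
  have hM5 : (5:ℝ) ≤ M := by rw [hM]; linarith
  have hM1 : (1:ℝ) ≤ M := by linarith
  have hM0 : (0:ℝ) < M := by linarith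
  have hMne : M ≠ 0 := ne_of_gt hM0
  have hc : simplexCentroid (Rverts s t) = fun _ => (1/2 : ℝ) := centroid_Rst s t
  -- M belongs to the defining set
  have hmem : M ∈ {σ : ℝ | 1 ≤ σ ∧ unitCube 5 ⊆ homSimplex (Rverts s t) σ} := by
    refine ⟨hM1, ?_⟩
    intro x hx
    have hx' : ∀ i, 0 ≤ x i ∧ x i ≤ 1 := hx
    set w : Fin 6 → ℝ := fun k => (1 - 1/M)/6 + lamRst s t k x / M with hw
    have hw0 : ∀ k ∈ Finset.univ, 0 ≤ w k := by
      intro k _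
      have hlb := lam_cube_lb s t hs1 hs2 ht1 ht2 A hA1 hA2 hA3 hA4 hA5 x hx' k
      have hwk : w k = ((M-1)/6 + lamRst s t k x) / M := by
        rw [hw]; field_simp
      rw [hwk]
      apply div_nonneg _ hM0.le
      have : (M-1)/6 = A := by rw [hM]; ring
      rw [this]; linarith
    have hwsum : ∑ k, w k = 1 := by
      rw [hw]
      rw [Finset.sum_add_distrib]
      simp only [← Finset.sum_div]
      rw [lam_sum_one]
      simp only [Finset.sum_const, Finset.card_univ, Fintype.card_fin, nsmul_eq_mul]
      field_simp
      ring
    have hp : Finset.univ.centerMass w (Rverts s t) ∈ simplexSet (Rverts s t) := by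
      apply Finset.centerMass_mem_convexHull _ hw0 (by rw [hwsum]; norm_num)
      intro k _
      exact Set.mem_range_self k
    have hpe : Finset.univ.centerMass w (Rverts s t) = ∑ k, w k • Rverts s t k :=
      Finset.centerMass_eq_of_sum_1 _ _ hwsum
    refine ⟨Finset.univ.centerMass w (Rverts s t), hp, ?_⟩
    funext i
    have hpi : (Finset.univ.centerMass w (Rverts s t)) i = (1 - 1/M)/2 + x i / M := by
      rw [hpe]
      have : (∑ k, w k • Rverts s t k) i = ∑ k, w k * Rverts s t k i := by
        simp [Finset.sum_apply]
      rw [this]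
      have e1 : ∑ k, w k * Rverts s t k i
          = ∑ k, ((1 - 1/M)/6 * Rverts s t k i + (lamRst s t k x * Rverts s t k i)/M) := by
        apply Finset.sum_congr rfl
        intro k _
        rw [hw]; ring
      rw [e1, Finset.sum_add_distrib, ← Finset.mul_sum, vert_sum, ← Finset.sum_div,
        lam_sum_vert]
      ring
    simp only [hc, Pi.add_apply, Pi.smul_apply, Pi.sub_apply, smul_eq_mul, hpi]
    field_simp
    ring
  -- M is a lower bound
  have hlow : ∀ σ ∈ {σ : ℝ | 1 ≤ σ ∧ unitCube 5 ⊆ homSimplex (Rverts s t) σ}, M ≤ σ := by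
    rintro σ ⟨hσ1, hσsub⟩
    have key : ∀ (k : Fin 6) (y : Fin 5 → ℝ), (∀ i, 0 ≤ y i ∧ y i ≤ 1) →
        1 - 6 * lamRst s t k y ≤ σ := by
      intro k y hy
      obtain ⟨p, hp, hpx⟩ := hσsub (show y ∈ unitCube 5 from hy)
      have hrw : y = σ • p + (1-σ) • (fun _ => (1/2:ℝ)) := by
        rw [← hpx]
        funext i
        simp only [hc, Pi.add_apply, Pi.smul_apply, Pi.sub_apply, smul_eq_mul]
        ring
      have hcomb := lam_comb s t k p (fun _ => (1/2:ℝ)) σ (1-σ) (by ring)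
      rw [hrw, hcomb, lam_centroid]
      have h0 := lam_nonneg_hull s t k p hp
      nlinarith [mul_nonneg (by linarith : (0:ℝ) ≤ σ) h0]
    have k2 := key 2 ![0,0,0,1,0] (by intro i; fin_cases i <;> norm_num)
    have k0 := key 0 ![0,0,0,0,1] (by intro i; fin_cases i <;> norm_num)
    have k1 := key 1 ![0,1,0,0,1] (by intro i; fin_cases i <;> norm_num)
    have k4 := key 4 ![1,0,0,0,0] (by intro i; fin_cases i <;> norm_num)
    have k5 := key 5 ![0,0,0,0,0] (by intro i; fin_cases i <;> norm_num)
    simp only [lamRst, cons_val_five', Matrix.cons_val_zero, Matrix.cons_val_one,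
      Matrix.head_cons, Matrix.cons_val_two, Matrix.tail_cons, Matrix.cons_val_three,
      Matrix.cons_val_four] at k2 k0 k1 k4 k5
    have hAle : A ≤ (σ - 1)/6 := by
      apply max_le; · linarith
      apply max_le; · linarith
      apply max_le; · linarith
      apply max_le <;> linarith
    rw [hM]; linarith
  have hbdd : BddBelow {σ : ℝ | 1 ≤ σ ∧ unitCube 5 ⊆ homSimplex (Rverts s t) σ} :=
    ⟨1, fun σ hσ => hσ.1⟩
  have hxi : xiVal (Rverts s t) = M :=
    le_antisymm (csInf_le hbdd hmem) (le_csInf ⟨M, hmem⟩ hlow)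
  refine ⟨hxi, ?_⟩
  rw [hxi, hM]
  have hA23 : 2/3 < A := by
    rcases h with h | h <;> rw [Set.mem_Icc, not_and_or, not_le, not_le] at h
    · rcases h with h | h
      · linarith
      · linarith
    · rcases h with h | h
      · linarith
      · linarith
  linarith
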